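/- Let & be a continuous t-norm on [0,1] with residuation →, and let a,b ∈ [0,1]. Then for every ε > 0 there exists δ > 0 such that a & ((a−δ) → b) < min{a,b} + ε. -/
import Mathlib


noncomputable def tres (f : ℝ → ℝ → ℝ) (x y : ℝ) : ℝ :=
  sSup {z | z ∈ Set.Icc (0:ℝ) 1 ∧ f x z ≤ y}

def IsContTNorm (f : ℝ → ℝ → ℝ) : Prop :=
  (∀ a ∈ Set.Icc (0:ℝ) 1, ∀ b ∈ Set.Icc (0:ℝ) 1, f a b ∈ Set.Icc (0:ℝ) 1) ∧
  ContinuousOn (fun p : ℝ × ℝ => f p.1 p.2) (Set.Icc 0 1 ×ˢ Set.Icc 0 1) ∧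
  (∀ a ∈ Set.Icc (0:ℝ) 1, ∀ b ∈ Set.Icc (0:ℝ) 1, f a b = f b a) ∧
  (∀ a ∈ Set.Icc (0:ℝ) 1, ∀ b ∈ Set.Icc (0:ℝ) 1, ∀ c ∈ Set.Icc (0:ℝ) 1,
    f (f a b) c = f a (f b c)) ∧
  (∀ a ∈ Set.Icc (0:ℝ) 1, ∀ b ∈ Set.Icc (0:ℝ) 1, ∀ c ∈ Set.Icc (0:ℝ) 1,
    a ≤ b → f a c ≤ f b c) ∧
  (∀ a ∈ Set.Icc (0:ℝ) 1, f a 1 = a)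

/-- for all `a, b ∈ [0,1]` and `ε > 0` there is `δ > 0` with
`a & ((a − δ) → b) < min a b + ε` (with `a − δ` truncated to remain in `[0,1]`). -/
theorem stmt4 (f : ℝ → ℝ → ℝ) (ht : IsContTNorm f)
    (a : ℝ) (ha : a ∈ Set.Icc (0:ℝ) 1) (b : ℝ) (hb : b ∈ Set.Icc (0:ℝ) 1) :
    ∀ ε > (0:ℝ), ∃ δ > (0:ℝ), f a (tres f (max (a - δ) 0) b) < min a b + ε := by
  obtain ⟨hrange, hcont, hcomm, hassoc, hmono, hunit⟩ := ht
  intro ε hε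
  have h01 : (0:ℝ) ∈ Set.Icc (0:ℝ) 1 := by constructor <;> norm_num
  have h11 : (1:ℝ) ∈ Set.Icc (0:ℝ) 1 := by constructor <;> norm_num
  -- uniform continuity
  have hK : IsCompact (Set.Icc (0:ℝ) 1 ×ˢ Set.Icc (0:ℝ) 1) :=
    (isCompact_Icc).prod isCompact_Icc
  have huc := hK.uniformContinuousOn_of_continuous hcont
  obtain ⟨δ₀, hδ₀, hucd⟩ := Metric.uniformContinuousOn_iff.mp huc ε hε
  refine ⟨δ₀ / 2, by linarith, ?_⟩
  set x := max (a - δ₀ / 2) 0 with hxdef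
  have hx : x ∈ Set.Icc (0:ℝ) 1 := by
    constructor
    · exact le_max_right _ _
    · exact max_le (by linarith [ha.2]) (by norm_num)
  set S := {z | z ∈ Set.Icc (0:ℝ) 1 ∧ f x z ≤ b} with hSdef
  have hf0 : f x 0 = 0 := by
    have h1 : f x 0 ≤ f 1 0 := hmono x hx 1 h11 0 h01 hx.2
    have h2 : f 1 0 = 0 := by rw [hcomm 1 h11 0 h01]; exact hunit 0 h01
    have h3 : (0:ℝ) ≤ f x 0 := (hrange x hx 0 h01).1
    linarith [h1, h2.symm ▸ h1]
  have h0S : (0:ℝ) ∈ S := ⟨h01, by rw [hf0]; exact hb.1⟩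
  have hSsub : S ⊆ Set.Icc (0:ℝ) 1 := fun z hz => hz.1
  have hScl : IsClosed S := by
    have : S = Set.Icc (0:ℝ) 1 ∩ (fun z => f x z) ⁻¹' Set.Iic b := by
      ext z
      simp only [hSdef, Set.mem_inter_iff, Set.mem_setOf_eq, Set.mem_preimage, Set.mem_Iic]
    rw [this]
    have hcz : ContinuousOn (fun z => f x z) (Set.Icc (0:ℝ) 1) := by
      have : ContinuousOn (fun z : ℝ => (x, z)) (Set.Icc (0:ℝ) 1) :=
        (continuous_const.prodMk continuous_id).continuousOn
      exact hcont.comp this (fun z hz => Set.mk_mem_prod hx hz)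
    exact hcz.preimage_isClosed_of_isClosed isClosed_Icc isClosed_Iic
  have hScomp : IsCompact S := (isCompact_Icc.of_isClosed_subset hScl hSsub)
  have hrS : sSup S ∈ S := hScomp.sSup_mem ⟨0, h0S⟩
  set r := sSup S with hrdef
  have hr : r ∈ Set.Icc (0:ℝ) 1 := hrS.1
  have hfxr : f x r ≤ b := hrS.2
  have htres : tres f x b = r := rfl
  rw [htres]
  -- f a r ≤ a
  have hle_a : f a r ≤ a := by
    have h1 : f a r = f r a := hcomm a ha r hr
    have h2 : f r a ≤ f 1 a := hmono r hr 1 h11 a ha hr.2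
    have h3 : f 1 a = a := by rw [hcomm 1 h11 a ha]; exact hunit a ha
    linarith
  -- f a r < b + ε via uniform continuity
  have hdist : dist ((a, r) : ℝ × ℝ) (x, r) < δ₀ := by
    have hax : |a - x| ≤ δ₀ / 2 := by
      rw [abs_le]
      constructor
      · have hxa : x ≤ a := max_le (by linarith) ha.1
        linarith
      · have : a - δ₀ / 2 ≤ x := le_max_left _ _
        linarith
    calc dist ((a, r) : ℝ × ℝ) (x, r) = max (dist a x) (dist r r) := rfl
      _ = dist a x := by simp [dist_nonneg]
      _ ≤ δ₀ / 2 := by rw [Real.dist_eq]; exact hax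
      _ < δ₀ := by linarith
  have hkey : dist (f a r) (f x r) < ε := by
    have := hucd (a, r) (Set.mk_mem_prod ha hr) (x, r) (Set.mk_mem_prod hx hr) hdist
    exact this
  have hlt : f a r < f x r + ε := by
    have := abs_sub_lt_iff.mp (by rwa [Real.dist_eq] at hkey)
    linarith [this.1]
  rcases le_total a b with h | h
  · rw [min_eq_left h]; linarith
  · rw [min_eq_right h]; linarith
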